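/- Let μ be an r-homogeneous probability distribution on subsets of [n] (i.e., μ is supported on sets of size exactly r) with a log-concave generating polynomial and marginals μ₁,...,μₙ. Then Σᵢ H(μᵢ) − r ≤ H(μ) ≤ Σᵢ H(μᵢ), where H(p) = p log(1/p) + (1−p) log(1/(1−p)). -/

import Mathlib

/-- The Shannon entropy of a distribution on subsets of `[n]`
(with the convention `0 · log (1/0) = 0`, automatic since `Real.log 0 = 0`). -/
noncomputable def setEntropy {n : ℕ} (μ : Finset (Fin n) → ℝ) : ℝ :=
  ∑ S : Finset (Fin n), μ S * Real.log (1 / μ S)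

/-- The marginal probability `μᵢ = P_{S∼μ}[i ∈ S]`. -/
noncomputable def marginal {n : ℕ} (μ : Finset (Fin n) → ℝ) (i : Fin n) : ℝ :=
  ∑ S : Finset (Fin n), if i ∈ S then μ S else 0

/-- Binary entropy `H(p) = p log(1/p) + (1-p) log(1/(1-p))`. -/
noncomputable def binEntropy (p : ℝ) : ℝ :=
  p * Real.log (1 / p) + (1 - p) * Real.log (1 / (1 - p))

/-- The multiaffine generating polynomial of `μ`, as a function. -/
noncomputable def genFun {n : ℕ} (μ : Finset (Fin n) → ℝ) (z : Fin n → ℝ) : ℝ :=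
  ∑ S : Finset (Fin n), μ S * ∏ i ∈ S, z i

open Finset Filter Topology

section Aux

variable {n : ℕ} {μ : Finset (Fin n) → ℝ}

lemma marginal_nonneg (hnn : ∀ S, 0 ≤ μ S) (i : Fin n) : 0 ≤ marginal μ i :=
  Finset.sum_nonneg fun S _ => by by_cases h : i ∈ S <;> simp [h, hnn S]

lemma marginal_le_one (hnn : ∀ S, 0 ≤ μ S)
    (hsum : ∑ S : Finset (Fin n), μ S = 1) (i : Fin n) : marginal μ i ≤ 1 := by
  rw [← hsum]
  exact Finset.sum_le_sum fun S _ => by by_cases h : i ∈ S <;> simp [h, hnn S]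

lemma le_marginal (hnn : ∀ S, 0 ≤ μ S) {i : Fin n} {S : Finset (Fin n)}
    (hi : i ∈ S) : μ S ≤ marginal μ i := by
  have := Finset.single_le_sum (f := fun T => if i ∈ T then μ T else 0)
    (fun T _ => by by_cases h : i ∈ T <;> simp [h, hnn T]) (Finset.mem_univ S)
  simpa [marginal, hi] using this

lemma le_one_sub_marginal (hnn : ∀ S, 0 ≤ μ S)
    (hsum : ∑ S : Finset (Fin n), μ S = 1) {i : Fin n} {S : Finset (Fin n)}
    (hi : i ∉ S) : μ S ≤ 1 - marginal μ i := by
  have h1 : (1 : ℝ) - marginal μ i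
      = ∑ T : Finset (Fin n), if i ∈ T then 0 else μ T := by
    rw [← hsum, marginal, ← Finset.sum_sub_distrib]
    refine Finset.sum_congr rfl fun T _ => ?_
    by_cases h : i ∈ T <;> simp [h]
  rw [h1]
  have := Finset.single_le_sum (f := fun T => if i ∈ T then 0 else μ T)
    (fun T _ => by by_cases h : i ∈ T <;> simp [h, hnn T]) (Finset.mem_univ S)
  simpa [hi] using this

/-- Exchange of summation. -/
lemma exchange (μ : Finset (Fin n) → ℝ) (c : Fin n → ℝ) :
    ∑ S : Finset (Fin n), μ S * ∑ i ∈ S, c i = ∑ i : Fin n, marginal μ i * c i := by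
  calc ∑ S : Finset (Fin n), μ S * ∑ i ∈ S, c i
      = ∑ S : Finset (Fin n), ∑ i : Fin n, (if i ∈ S then μ S * c i else 0) := by
        refine Finset.sum_congr rfl fun S _ => ?_
        rw [Finset.sum_ite_mem, Finset.univ_inter, Finset.mul_sum]
    _ = ∑ i : Fin n, ∑ S : Finset (Fin n), (if i ∈ S then μ S * c i else 0) :=
        Finset.sum_comm
    _ = ∑ i : Fin n, marginal μ i * c i := by
        refine Finset.sum_congr rfl fun i _ => ?_
        rw [marginal, Finset.sum_mul]
        refine Finset.sum_congr rfl fun S _ => ?_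
        by_cases h : i ∈ S <;> simp [h]

lemma exchange_compl (hsum : ∑ S : Finset (Fin n), μ S = 1) (c : Fin n → ℝ) :
    ∑ S : Finset (Fin n), μ S * ∑ i ∈ Sᶜ, c i
      = ∑ i : Fin n, (1 - marginal μ i) * c i := by
  have h : ∀ S : Finset (Fin n), μ S * ∑ i ∈ Sᶜ, c i
      = μ S * ∑ i : Fin n, c i - μ S * ∑ i ∈ S, c i := by
    intro S
    rw [← mul_sub]
    congr 1
    have := Finset.sum_add_sum_compl S c
    linarith
  rw [Finset.sum_congr rfl fun S _ => h S, Finset.sum_sub_distrib,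
    ← Finset.sum_mul, hsum, exchange, one_mul, ← Finset.sum_sub_distrib]
  exact Finset.sum_congr rfl fun i _ => by ring

lemma sum_marginal (hsum : ∑ S : Finset (Fin n), μ S = 1) {r : ℕ}
    (hhom : ∀ S, μ S ≠ 0 → S.card = r) :
    ∑ i : Fin n, marginal μ i = r := by
  have := exchange μ (fun _ => (1 : ℝ))
  simp only [mul_one] at this
  rw [← this]
  have h : ∀ S : Finset (Fin n), μ S * ∑ _i ∈ S, (1:ℝ) = μ S * r := by
    intro S
    by_cases h0 : μ S = 0
    · simp [h0]
    · simp [hhom S h0]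
  rw [Finset.sum_congr rfl fun S _ => h S, ← Finset.sum_mul, hsum, one_mul]

lemma genFun_one (hsum : ∑ S : Finset (Fin n), μ S = 1) :
    genFun μ (fun _ => 1) = 1 := by
  simp [genFun, hsum]

lemma genFun_pos (hnn : ∀ S, 0 ≤ μ S) (hsum : ∑ S : Finset (Fin n), μ S = 1)
    {z : Fin n → ℝ} (hz : ∀ i, 0 < z i) : 0 < genFun μ z := by
  obtain ⟨S₀, hS₀⟩ : ∃ S : Finset (Fin n), μ S ≠ 0 := by
    by_contra h
    push_neg at h
    simp [h] at hsum
  have hpos : 0 < μ S₀ * ∏ i ∈ S₀, z i :=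
    mul_pos ((hnn S₀).lt_of_ne (Ne.symm hS₀)) (Finset.prod_pos fun i _ => hz i)
  refine lt_of_lt_of_le hpos ?_
  rw [genFun]
  exact Finset.single_le_sum (f := fun T : Finset (Fin n) => μ T * ∏ i ∈ T, z i)
    (fun S _ => mul_nonneg (hnn S) (Finset.prod_nonneg fun i _ => (hz i).le))
    (Finset.mem_univ S₀)

end Aux

/-- The tangent-line bound coming from log-concavity:
`log g(z) ≤ ∑ μᵢ zᵢ - r` for positive `z`. -/
lemma log_genFun_le {n r : ℕ} {μ : Finset (Fin n) → ℝ}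
    (hnn : ∀ S, 0 ≤ μ S) (hsum : ∑ S : Finset (Fin n), μ S = 1)
    (hhom : ∀ S, μ S ≠ 0 → S.card = r)
    (hlc : ∀ v w : Fin n → ℝ, (∀ i, 0 ≤ v i) → (∀ i, 0 ≤ w i) →
      ∀ l : ℝ, 0 ≤ l → l ≤ 1 →
        (genFun μ v) ^ l * (genFun μ w) ^ (1 - l) ≤ genFun μ (l • v + (1 - l) • w))
    {z : Fin n → ℝ} (hz : ∀ i, 0 < z i) :
    Real.log (genFun μ z) ≤ (∑ i : Fin n, marginal μ i * z i) - r := by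
  set w : Fin n → ℝ := fun i => z i - 1 with hw
  set h : ℝ → ℝ := fun t => genFun μ (fun i => 1 + t * w i) with hh
  set D : ℝ := ∑ i : Fin n, marginal μ i * w i with hD
  -- h has derivative D at 0
  have hderiv : HasDerivAt h D 0 := by
    have hterm : ∀ S : Finset (Fin n),
        HasDerivAt (fun t : ℝ => μ S * ∏ i ∈ S, (1 + t * w i))
          (μ S * ∑ i ∈ S, w i) 0 := by
      intro S
      have hp : HasDerivAt (fun t : ℝ => ∏ i ∈ S, (1 + t * w i))
          (∑ i ∈ S, (∏ j ∈ S.erase i, (1 + (0:ℝ) * w j)) • w i) 0 :=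
        HasDerivAt.fun_finsetProd fun i _ => (hasDerivAt_mul_const (w i)).const_add 1
      have hsimp : (∑ i ∈ S, (∏ j ∈ S.erase i, (1 + (0:ℝ) * w j)) • w i)
          = ∑ i ∈ S, w i := by
        refine Finset.sum_congr rfl fun i _ => ?_
        simp
      rw [hsimp] at hp
      exact hp.const_mul (μ S)
    have := HasDerivAt.fun_sum (fun S _ => hterm S) (u := Finset.univ)
    have heq : D = ∑ S : Finset (Fin n), μ S * ∑ i ∈ S, w i := by
      rw [hD, exchange]
    rw [heq]
    exact this
  have h0 : h 0 = 1 := by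
    have : (fun i : Fin n => 1 + (0:ℝ) * w i) = fun _ => 1 := by
      funext i; ring
    rw [hh]; simp only [this]; exact genFun_one hsum
  -- f = log ∘ h has derivative D at 0
  have hf : HasDerivAt (fun t => Real.log (h t)) D 0 := by
    have := hderiv.log (by rw [h0]; norm_num)
    simpa [h0] using this
  -- slope bound from log-concavity
  have hslope : ∀ t : ℝ, t ∈ Set.Ioc (0:ℝ) 1 →
      Real.log (genFun μ z) ≤ slope (fun t => Real.log (h t)) 0 t := by
    intro t ht
    obtain ⟨ht0, ht1⟩ := ht
    have hgz : 0 < genFun μ z := genFun_pos hnn hsum hz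
    have hcomb := hlc z (fun _ => 1) (fun i => (hz i).le) (fun _ => zero_le_one)
      t ht0.le ht1
    rw [genFun_one hsum, Real.one_rpow, mul_one] at hcomb
    have hpt : (t • z + (1 - t) • fun _ : Fin n => (1:ℝ))
        = fun i => 1 + t * w i := by
      funext i
      simp [hw]
      ring
    rw [hpt] at hcomb
    have hht : 0 < h t := by
      refine genFun_pos hnn hsum fun i => ?_
      have : (1:ℝ) + t * w i = t * z i + (1 - t) := by rw [hw]; ring
      rw [this]
      have := mul_pos ht0 (hz i)
      nlinarith
    have hlog : t * Real.log (genFun μ z) ≤ Real.log (h t) := by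
      calc t * Real.log (genFun μ z) = Real.log ((genFun μ z) ^ t) :=
            (Real.log_rpow hgz t).symm
        _ ≤ Real.log (h t) := Real.log_le_log (Real.rpow_pos_of_pos hgz t) hcomb
    have hf0 : Real.log (h 0) = 0 := by rw [h0, Real.log_one]
    rw [slope_def_field, hf0, sub_zero, sub_zero, le_div_iff₀ ht0]
    nlinarith [hlog]
  -- take the limit t → 0+
  have htend : Tendsto (slope (fun t => Real.log (h t)) 0) (𝓝[>] (0:ℝ)) (𝓝 D) := by
    have := hasDerivAt_iff_tendsto_slope.mp hf
    exact this.mono_left (nhdsWithin_mono 0 fun x hx =>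
      Set.mem_compl_singleton_iff.mpr (ne_of_gt hx))
  have hle : Real.log (genFun μ z) ≤ D := by
    refine ge_of_tendsto htend ?_
    filter_upwards [Ioc_mem_nhdsGT_of_mem (Set.mem_Ico.mpr ⟨le_refl (0:ℝ), one_pos⟩)]
      with t ht
    exact hslope t ht
  calc Real.log (genFun μ z) ≤ D := hle
    _ = (∑ i : Fin n, marginal μ i * z i) - r := by
        rw [hD, ← sum_marginal hsum hhom, ← Finset.sum_sub_distrib]
        refine Finset.sum_congr rfl fun i _ => ?_
        rw [hw]; ring

/-- Negative correlation: `μ S ≤ ∏_{i ∈ S} μᵢ`. -/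
lemma mu_le_prod_marginal {n r : ℕ} {μ : Finset (Fin n) → ℝ}
    (hnn : ∀ S, 0 ≤ μ S) (hsum : ∑ S : Finset (Fin n), μ S = 1)
    (hhom : ∀ S, μ S ≠ 0 → S.card = r)
    (hlc : ∀ v w : Fin n → ℝ, (∀ i, 0 ≤ v i) → (∀ i, 0 ≤ w i) →
      ∀ l : ℝ, 0 ≤ l → l ≤ 1 →
        (genFun μ v) ^ l * (genFun μ w) ^ (1 - l) ≤ genFun μ (l • v + (1 - l) • w))
    (S : Finset (Fin n)) : μ S ≤ ∏ i ∈ S, marginal μ i := by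
  by_cases h0 : μ S = 0
  · rw [h0]
    exact Finset.prod_nonneg fun i _ => marginal_nonneg hnn i
  have hS : 0 < μ S := (hnn S).lt_of_ne (Ne.symm h0)
  have hmi : ∀ i ∈ S, 0 < marginal μ i := fun i hi => lt_of_lt_of_le hS (le_marginal hnn hi)
  have hP : 0 < ∏ i ∈ S, marginal μ i := Finset.prod_pos hmi
  set c : ℝ := ∑ i ∈ Sᶜ, marginal μ i with hc
  have hc0 : 0 ≤ c := Finset.sum_nonneg fun i _ => marginal_nonneg hnn i
  have key : ∀ ε : ℝ, 0 < ε →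
      Real.log (μ S) - Real.log (∏ i ∈ S, marginal μ i) ≤ ε * c := by
    intro ε hε
    set z : Fin n → ℝ := fun i => if i ∈ S then (marginal μ i)⁻¹ else ε with hz
    have hzpos : ∀ i, 0 < z i := by
      intro i
      rw [hz]
      by_cases h : i ∈ S
      · simp only [h, if_true]
        exact inv_pos.mpr (hmi i h)
      · simp only [h, if_false]
        exact hε
    have hterm : μ S * (∏ i ∈ S, marginal μ i)⁻¹ ≤ genFun μ z := by
      have : μ S * ∏ i ∈ S, z i = μ S * (∏ i ∈ S, marginal μ i)⁻¹ := by
        congr 1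
        rw [← Finset.prod_inv_distrib]
        exact Finset.prod_congr rfl fun i hi => by simp [hz, hi]
      rw [← this, genFun]
      exact Finset.single_le_sum (f := fun T : Finset (Fin n) => μ T * ∏ i ∈ T, z i)
        (fun T _ => mul_nonneg (hnn T) (Finset.prod_nonneg fun i _ => (hzpos i).le))
        (Finset.mem_univ S)
    have hlog1 : Real.log (μ S) - Real.log (∏ i ∈ S, marginal μ i)
        ≤ Real.log (genFun μ z) := by
      have := Real.log_le_log (mul_pos hS (inv_pos.mpr hP)) hterm
      rwa [Real.log_mul h0 (inv_ne_zero hP.ne'), Real.log_inv, ← sub_eq_add_neg] at this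
    have hlog2 := log_genFun_le hnn hsum hhom hlc hzpos
    have hsumz : ∑ i : Fin n, marginal μ i * z i = S.card + ε * c := by
      have e1 : ∀ i ∈ S, marginal μ i * z i = 1 := by
        intro i hi
        simp only [hz, hi, if_true]
        exact mul_inv_cancel₀ (hmi i hi).ne'
      have e2 : ∀ i ∈ Sᶜ, marginal μ i * z i = ε * marginal μ i := by
        intro i hi
        rw [Finset.mem_compl] at hi
        simp only [hz, hi, if_false]
        ring
      rw [← Finset.sum_add_sum_compl S (fun i => marginal μ i * z i),
        Finset.sum_congr rfl e1, Finset.sum_congr rfl e2, Finset.sum_const,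
        ← Finset.mul_sum, ← hc]
      simp
    rw [hsumz, hhom S h0] at hlog2
    calc Real.log (μ S) - Real.log (∏ i ∈ S, marginal μ i)
        ≤ Real.log (genFun μ z) := hlog1
      _ ≤ (r : ℝ) + ε * c - r := hlog2
      _ = ε * c := by ring
  have hle0 : Real.log (μ S) - Real.log (∏ i ∈ S, marginal μ i) ≤ 0 := by
    refine le_of_forall_pos_le_add fun δ hδ => ?_
    rcases eq_or_lt_of_le hc0 with hceq | hcpos
    · have := key 1 one_pos
      rw [← hceq, mul_zero] at this
      linarith
    · have := key (δ / c) (div_pos hδ hcpos)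
      rw [div_mul_cancel₀ _ hcpos.ne'] at this
      linarith
  have := sub_nonpos.mp hle0
  exact (Real.log_le_log_iff hS hP).mp this

/-- `x log (1/x) ≤ 1 - x` for `0 < x`. -/
lemma mul_log_one_div_le {x : ℝ} (hx : 0 < x) : x * Real.log (1 / x) ≤ 1 - x := by
  have h := Real.log_le_sub_one_of_pos (one_div_pos.mpr hx)
  have := mul_le_mul_of_nonneg_left h hx.le
  calc x * Real.log (1 / x) ≤ x * (1 / x - 1) := this
    _ = 1 - x := by field_simp

/-- For an `r`-homogeneous probability distribution `μ` on subsets of `[n]` with a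
log-concave generating polynomial, `∑ᵢ H(μᵢ) − r ≤ H(μ) ≤ ∑ᵢ H(μᵢ)`. -/
theorem setEntropy_additive_approx
    {n r : ℕ} (μ : Finset (Fin n) → ℝ)
    (hnn : ∀ S, 0 ≤ μ S) (hsum : ∑ S : Finset (Fin n), μ S = 1)
    (hhom : ∀ S, μ S ≠ 0 → S.card = r)
    (hlc : ∀ v w : Fin n → ℝ, (∀ i, 0 ≤ v i) → (∀ i, 0 ≤ w i) →
      ∀ l : ℝ, 0 ≤ l → l ≤ 1 →
        (genFun μ v) ^ l * (genFun μ w) ^ (1 - l) ≤ genFun μ (l • v + (1 - l) • w)) :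
    (∑ i : Fin n, binEntropy (marginal μ i)) - r ≤ setEntropy μ ∧
      setEntropy μ ≤ ∑ i : Fin n, binEntropy (marginal μ i) := by
  -- notation
  set m : Fin n → ℝ := fun i => marginal μ i with hm
  have hm0 : ∀ i, 0 ≤ m i := fun i => marginal_nonneg hnn i
  have hm1 : ∀ i, m i ≤ 1 := fun i => marginal_le_one hnn hsum i
  -- the binary entropy sum, re-expressed
  have hbin : ∑ i : Fin n, binEntropy (m i)
      = ∑ S : Finset (Fin n), μ S *
          ((∑ i ∈ S, Real.log (1 / m i)) + ∑ i ∈ Sᶜ, Real.log (1 / (1 - m i))) := by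
    simp only [binEntropy, Finset.sum_add_distrib]
    rw [Finset.sum_congr rfl (fun S (_ : S ∈ Finset.univ) =>
      mul_add (μ S) (∑ i ∈ S, Real.log (1 / m i)) (∑ i ∈ Sᶜ, Real.log (1 / (1 - m i)))),
      Finset.sum_add_distrib, exchange μ (fun i => Real.log (1 / m i)),
      exchange_compl hsum (fun i => Real.log (1 / (1 - m i)))]
  constructor
  · -- LOWER BOUND
    -- step 1: H(μ) ≥ ∑ᵢ mᵢ log(1/mᵢ)
    have step1 : ∑ i : Fin n, m i * Real.log (1 / m i) ≤ setEntropy μ := by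
      rw [← exchange μ (fun i => Real.log (1 / m i)), setEntropy]
      refine Finset.sum_le_sum fun S _ => ?_
      by_cases h0 : μ S = 0
      · simp [h0]
      have hS : 0 < μ S := (hnn S).lt_of_ne (Ne.symm h0)
      have hmi : ∀ i ∈ S, 0 < m i := fun i hi => lt_of_lt_of_le hS (le_marginal hnn hi)
      have hP : 0 < ∏ i ∈ S, m i := Finset.prod_pos hmi
      have hle : μ S ≤ ∏ i ∈ S, m i := mu_le_prod_marginal hnn hsum hhom hlc S
      refine mul_le_mul_of_nonneg_left ?_ (hnn S)
      have : ∑ i ∈ S, Real.log (1 / m i) = Real.log (1 / ∏ i ∈ S, m i) := by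
        rw [one_div, Real.log_inv, Real.log_prod (s := S) (fun i hi => (hmi i hi).ne'),
          ← Finset.sum_neg_distrib]
        exact Finset.sum_congr rfl fun i hi => by rw [one_div, Real.log_inv]
      rw [this, one_div, one_div, Real.log_inv, Real.log_inv, neg_le_neg_iff]
      exact Real.log_le_log hS hle
    -- step 2: ∑ᵢ H(mᵢ) - r ≤ ∑ᵢ mᵢ log(1/mᵢ)
    have step2 : (∑ i : Fin n, binEntropy (m i)) - r
        ≤ ∑ i : Fin n, m i * Real.log (1 / m i) := by
      have hr : (r : ℝ) = ∑ i : Fin n, m i := (sum_marginal hsum hhom).symm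
      rw [hr, ← Finset.sum_sub_distrib]
      refine Finset.sum_le_sum fun i _ => ?_
      rw [binEntropy]
      have : (1 - m i) * Real.log (1 / (1 - m i)) ≤ m i := by
        rcases eq_or_lt_of_le (hm1 i) with heq | hlt
        · rw [heq]; simp
        · have h1m : 0 < 1 - m i := by linarith
          have := mul_log_one_div_le h1m
          linarith
      linarith
    linarith
  · -- UPPER BOUND (subadditivity, via the product distribution ν)
    set ν : Finset (Fin n) → ℝ :=
      fun S => (∏ i ∈ S, m i) * ∏ i ∈ Sᶜ, (1 - m i) with hν
    have hνnn : ∀ S, 0 ≤ ν S := fun S =>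
      mul_nonneg (Finset.prod_nonneg fun i _ => hm0 i)
        (Finset.prod_nonneg fun i _ => by linarith [hm1 i])
    have hνsum : ∑ S : Finset (Fin n), ν S = 1 := by
      have hpa := Finset.prod_add m (fun i => 1 - m i) Finset.univ
      simp only [Finset.powerset_univ] at hpa
      have h1 : ∀ i ∈ Finset.univ, m i + (1 - m i) = (1:ℝ) := fun i _ => by ring
      rw [Finset.prod_congr rfl h1, Finset.prod_const_one] at hpa
      have h2 : ∀ S ∈ Finset.univ, ν S
          = (∏ i ∈ S, m i) * ∏ i ∈ Finset.univ \ S, (1 - m i) := by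
        intro S _
        rw [hν, ← Finset.compl_eq_univ_sdiff]
      rw [Finset.sum_congr rfl h2]
      exact hpa.symm
    have hνpos : ∀ S, μ S ≠ 0 → 0 < ν S := by
      intro S h0
      have hS : 0 < μ S := (hnn S).lt_of_ne (Ne.symm h0)
      refine mul_pos (Finset.prod_pos fun i hi => lt_of_lt_of_le hS (le_marginal hnn hi))
        (Finset.prod_pos fun i hi => ?_)
      rw [Finset.mem_compl] at hi
      exact lt_of_lt_of_le hS (le_one_sub_marginal hnn hsum hi)
    rw [hbin]
    have key : ∀ S : Finset (Fin n),
        μ S * Real.log (1 / μ S)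
          - μ S * ((∑ i ∈ S, Real.log (1 / m i)) + ∑ i ∈ Sᶜ, Real.log (1 / (1 - m i)))
          ≤ ν S - μ S := by
      intro S
      by_cases h0 : μ S = 0
      · simp [h0, hνnn S]
      have hS : 0 < μ S := (hnn S).lt_of_ne (Ne.symm h0)
      have hmi : ∀ i ∈ S, 0 < m i := fun i hi => lt_of_lt_of_le hS (le_marginal hnn hi)
      have hmi' : ∀ i ∈ Sᶜ, 0 < 1 - m i := fun i hi =>
        lt_of_lt_of_le hS (le_one_sub_marginal hnn hsum (Finset.mem_compl.mp hi))
      have hνS : 0 < ν S := hνpos S h0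
      have hE : (∑ i ∈ S, Real.log (1 / m i)) + ∑ i ∈ Sᶜ, Real.log (1 / (1 - m i))
          = - Real.log (ν S) := by
        rw [hν, Real.log_mul (Finset.prod_pos hmi).ne' (Finset.prod_pos hmi').ne',
          Real.log_prod (s := S) (fun i hi => (hmi i hi).ne'),
          Real.log_prod (s := Sᶜ) (fun i hi => (hmi' i hi).ne'), neg_add,
          ← Finset.sum_neg_distrib, ← Finset.sum_neg_distrib]
        congr 1 <;> exact Finset.sum_congr rfl fun i hi => by rw [one_div, Real.log_inv]
      rw [hE, one_div, Real.log_inv, mul_neg, mul_neg, sub_neg_eq_add]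
      have hlog := Real.log_le_sub_one_of_pos (div_pos hνS hS)
      have h2 : μ S * Real.log (ν S / μ S) ≤ ν S - μ S := by
        calc μ S * Real.log (ν S / μ S) ≤ μ S * (ν S / μ S - 1) :=
              mul_le_mul_of_nonneg_left hlog hS.le
          _ = ν S - μ S := by field_simp
      rw [Real.log_div hνS.ne' h0] at h2
      linarith
    have hsum_le := Finset.sum_le_sum fun S (_ : S ∈ Finset.univ) => key S
    rw [Finset.sum_sub_distrib, Finset.sum_sub_distrib, hνsum, hsum] at hsum_le
    rw [setEntropy]
    linarith
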